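/- Let X be a finitely generated A_n-module whose underlying R_n-module is isomorphic to R_n^{⊕r} ⊕ R_{n-1}^{⊕s} for some non-negative integers r and s, and suppose that X/t^{n-1}X is projective as a module over A_{n-1}. Then there exist a finitely generated projective A_n-module Y and a surjective A_n-linear map ψ: Y → X whose kernel is annihilated by t. -/

import Mathlib

open scoped TensorProduct DirectSum

noncomputable section

variable (S : Type) [CommRing S] [IsDomain S] [IsDiscreteValuationRing S]
variable (t : S)
variable (G : Type) [Group G] [Fintype G]

/-- `Rq n` is the quotient ring `R_n = S/(t^n)`. -/
abbrev Rq (n : ℕ) : Type := S ⧸ Ideal.span {t ^ n}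

/-- `Aq n` is the group algebra `A_n = R_n G`. -/
abbrev Aq (n : ℕ) : Type := MonoidAlgebra (Rq S t n) G

/-- The canonical surjection `R_n → R_i` for `i ≤ n`. -/
def Rmap (i n : ℕ) (h : i ≤ n) : Rq S t n →+* Rq S t i :=
  Ideal.Quotient.factor (Ideal.span_singleton_le_span_singleton.mpr (pow_dvd_pow t h))

/-- The canonical surjection `A_n → A_i` for `i ≤ n`, induced by `R_n → R_i`. -/
def Amap (i n : ℕ) (h : i ≤ n) : Aq S t G n →+* Aq S t G i :=
  letI : Algebra (Rq S t n) (Aq S t G i) :=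
    RingHom.toAlgebra' ((algebraMap (Rq S t i) (Aq S t G i)).comp (Rmap S t i n h))
      (fun r x => Algebra.commutes (Rmap S t i n h r) x)
  ((MonoidAlgebra.lift (Rq S t n) (Aq S t G i) G) (MonoidAlgebra.of (Rq S t i) G)).toRingHom

/-- The augmentation map `A_n → R_n`, `Σ r_g g ↦ Σ r_g`. -/
def aug (n : ℕ) : Aq S t G n →+* Rq S t n :=
  ((MonoidAlgebra.lift (Rq S t n) (Rq S t n) G) 1).toRingHom

/-- The image of `t` in `R_n`. -/
def tbar (n : ℕ) : Rq S t n := Ideal.Quotient.mk _ t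

/-- The norm element `Σ_{g ∈ G} g` of `A_n`. -/
def sigmaEl (n : ℕ) : Aq S t G n := ∑ g : G, MonoidAlgebra.of (Rq S t n) G g

/-- The element `t^{i-1} Σ_{g ∈ G} g` of `A_i`. -/
def wEl (i : ℕ) : Aq S t G i :=
  algebraMap (Rq S t i) (Aq S t G i) (tbar S t i ^ (i - 1)) * sigmaEl S t G i

/-- `W_i = A_i/⟨t^{i-1} Σ_{g∈G} g⟩`. -/
abbrev Wmod (i : ℕ) : Type :=
  Aq S t G i ⧸ Submodule.span (Aq S t G i) {wEl S t G i}

/-- The submodule `t^m X` of an `A_n`-module `X`. -/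
def tSub (n m : ℕ) (X : Type) [AddCommGroup X] [Module (Aq S t G n) X] :
    Submodule (Aq S t G n) X :=
  Submodule.span (Aq S t G n)
    (Set.range fun x : X => algebraMap (Rq S t n) (Aq S t G n) (tbar S t n ^ m) • x)


/-- A finitely generated projective `A_n`-module `Y` together with a surjective `A_n`-linear
map `ψ : Y → X` whose kernel is annihilated by `t`. -/
structure ProjCover (n : ℕ) (X : Type) [AddCommGroup X] [Module (Aq S t G n) X] :
    Type 1 where
  Y : Type
  [addY : AddCommGroup Y]
  [modY : Module (Aq S t G n) Y]
  finY : Module.Finite (Aq S t G n) Y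
  projY : Module.Projective (Aq S t G n) Y
  ψ : Y →ₗ[Aq S t G n] X
  surj : Function.Surjective ψ
  ker_ann : ∀ y ∈ LinearMap.ker ψ,
    algebraMap (Rq S t n) (Aq S t G n) (tbar S t n) • y = 0

set_option linter.unusedSectionVars false
set_option linter.unusedVariables false
set_option maxHeartbeats 1000000

section StatementNineAux

lemma tbar_pow_eq_zero (n : ℕ) : tbar S t n ^ n = 0 := by
  rw [tbar, ← map_pow, Ideal.Quotient.eq_zero_iff_mem]
  exact Ideal.mem_span_singleton_self _

lemma tbar_pow_eq_zero_of_le (n k : ℕ) (h : n ≤ k) : tbar S t n ^ k = 0 :=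
  pow_eq_zero_of_le h (tbar_pow_eq_zero S t n)

lemma Rmap_mk (i n : ℕ) (h : i ≤ n) (s₀ : S) :
    Rmap S t i n h (Ideal.Quotient.mk _ s₀) = Ideal.Quotient.mk _ s₀ := rfl

lemma Rmap_surjective (i n : ℕ) (h : i ≤ n) : Function.Surjective (Rmap S t i n h) := by
  intro x
  obtain ⟨s₀, rfl⟩ := Ideal.Quotient.mk_surjective x
  exact ⟨Ideal.Quotient.mk _ s₀, Rmap_mk S t i n h s₀⟩

lemma Rmap_ker (n : ℕ) (r : Rq S t n)
    (hr : Rmap S t (n - 1) n (Nat.sub_le n 1) r = 0) :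
    ∃ u : Rq S t n, r = u * tbar S t n ^ (n - 1) := by
  obtain ⟨s₀, rfl⟩ := Ideal.Quotient.mk_surjective r
  rw [Rmap_mk, Ideal.Quotient.eq_zero_iff_mem, Ideal.mem_span_singleton] at hr
  obtain ⟨u, rfl⟩ := hr
  exact ⟨Ideal.Quotient.mk _ u, by rw [tbar, ← map_pow, ← map_mul, mul_comm]⟩

lemma Aq_algebraMap_eq (n : ℕ) (r : Rq S t n) :
    algebraMap (Rq S t n) (Aq S t G n) r = MonoidAlgebra.single 1 r := by
  rw [MonoidAlgebra.coe_algebraMap]; simp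

lemma Amap_single (i n : ℕ) (h : i ≤ n) (g : G) (r : Rq S t n) :
    Amap S t G i n h (MonoidAlgebra.single g r) =
      MonoidAlgebra.single g (Rmap S t i n h r) := by
  letI : Algebra (Rq S t n) (Aq S t G i) :=
    RingHom.toAlgebra' ((algebraMap (Rq S t i) (Aq S t G i)).comp (Rmap S t i n h))
      (fun r x => Algebra.commutes (Rmap S t i n h r) x)
  show ((MonoidAlgebra.lift (Rq S t n) (Aq S t G i) G) (MonoidAlgebra.of (Rq S t i) G))
      (MonoidAlgebra.single g r) = _
  rw [MonoidAlgebra.lift_single, Algebra.smul_def]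
  show (algebraMap (Rq S t i) (Aq S t G i)) (Rmap S t i n h r) * _ = _
  rw [Aq_algebraMap_eq, MonoidAlgebra.of_apply, MonoidAlgebra.single_mul_single, one_mul,
    mul_one]

lemma Amap_surjective (i n : ℕ) (h : i ≤ n) : Function.Surjective (Amap S t G i n h) := by
  intro x
  induction x using MonoidAlgebra.induction_linear with
  | zero => exact ⟨0, map_zero _⟩
  | add f₁ f₂ h₁ h₂ =>
    obtain ⟨y₁, hy₁⟩ := h₁; obtain ⟨y₂, hy₂⟩ := h₂
    exact ⟨y₁ + y₂, by rw [map_add, hy₁, hy₂]⟩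
  | single g r =>
    obtain ⟨u, hu⟩ := Rmap_surjective S t i n h r
    exact ⟨MonoidAlgebra.single g u, by rw [Amap_single, hu]⟩

lemma Amap_coeff (i n : ℕ) (h : i ≤ n) (x : Aq S t G n) (g : G) :
    (Amap S t G i n h x).coeff g = Rmap S t i n h (x.coeff g) := by
  induction x using MonoidAlgebra.induction_linear with
  | zero => simp
  | add f₁ f₂ h₁ h₂ => rw [map_add, MonoidAlgebra.coeff_add, MonoidAlgebra.coeff_add,
      Finsupp.add_apply, Finsupp.add_apply, h₁, h₂, map_add]
  | single g' r =>
    rw [Amap_single, MonoidAlgebra.coeff_single, MonoidAlgebra.coeff_single]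
    rcases eq_or_ne g' g with rfl | hne
    · rw [Finsupp.single_eq_same, Finsupp.single_eq_same]
    · rw [Finsupp.single_eq_of_ne hne.symm, Finsupp.single_eq_of_ne hne.symm, map_zero]

lemma Amap_ker (n : ℕ) (x : Aq S t G n)
    (hx : Amap S t G (n - 1) n (Nat.sub_le n 1) x = 0) :
    ∃ b : Aq S t G n,
      x = b * algebraMap (Rq S t n) (Aq S t G n) (tbar S t n ^ (n - 1)) := by
  classical
  have hcoeff : ∀ g : G, ∃ u : Rq S t n, x.coeff g = u * tbar S t n ^ (n - 1) := fun g =>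
    Rmap_ker S t n (x.coeff g) (by rw [← Amap_coeff, hx]; rfl)
  choose u hu using hcoeff
  refine ⟨∑ g ∈ x.coeff.support, MonoidAlgebra.single g (u g), ?_⟩
  rw [Aq_algebraMap_eq, Finset.sum_mul]
  conv_lhs => rw [← MonoidAlgebra.sum_coeff_single x, Finsupp.sum]
  refine Finset.sum_congr rfl fun g _ => ?_
  rw [MonoidAlgebra.single_mul_single, mul_one, ← hu]

lemma cB_pow_eq_zero (n : ℕ) (hn : 2 ≤ n) :
    (algebraMap (Rq S t n) (Aq S t G n) (tbar S t n ^ (n - 1))) ^ n = 0 := by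
  have hle : n ≤ (n - 1) * n := by
    calc n = 1 * n := (one_mul n).symm
    _ ≤ (n - 1) * n := Nat.mul_le_mul_right n (by omega)
  rw [← map_pow, ← pow_mul, tbar_pow_eq_zero_of_le S t n _ hle, map_zero]

lemma Amap_ker_isNilpotent (n : ℕ) (hn : 2 ≤ n) :
    ∀ x ∈ RingHom.ker (Amap S t G (n - 1) n (Nat.sub_le n 1)), IsNilpotent x := by
  intro x hx
  obtain ⟨b, rfl⟩ := Amap_ker S t G n x hx
  refine ⟨n, ?_⟩
  have hc : Commute b (algebraMap (Rq S t n) (Aq S t G n) (tbar S t n ^ (n - 1))) :=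
    Commute.symm (by exact Algebra.commutes _ _)
  rw [hc.mul_pow, cB_pow_eq_zero S t G n hn, mul_zero]

lemma mapMatrix_ker_isNilpotent (n : ℕ) (hn : 2 ≤ n) (m : ℕ) :
    ∀ M ∈ RingHom.ker
      ((Amap S t G (n - 1) n (Nat.sub_le n 1)).mapMatrix (m := Fin m)), IsNilpotent M := by
  classical
  intro M hM
  have hM' : ∀ i j : Fin m, Amap S t G (n - 1) n (Nat.sub_le n 1) (M i j) = 0 := by
    intro i j
    have h : (Amap S t G (n - 1) n (Nat.sub_le n 1)).mapMatrix M = 0 := hM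
    have h2 := congrFun (congrFun (congrArg (fun M => M) h) i) j
    simpa [RingHom.mapMatrix_apply, Matrix.map_apply] using h2
  have hentry : ∀ i j : Fin m, ∃ b : Aq S t G n,
      M i j = b * algebraMap (Rq S t n) (Aq S t G n) (tbar S t n ^ (n - 1)) :=
    fun i j => Amap_ker S t G n (M i j) (hM' i j)
  choose N hN using hentry
  set cB := algebraMap (Rq S t n) (Aq S t G n) (tbar S t n ^ (n - 1)) with hcB
  have hMeq : M = (Matrix.of N) * Matrix.diagonal (fun _ => cB) := by
    refine Matrix.ext fun i j => ?_
    rw [Matrix.mul_diagonal]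
    exact hN i j
  have hcomm : Commute (Matrix.of N) (Matrix.diagonal (fun _ : Fin m => cB)) := by
    show _ * _ = _ * _
    refine Matrix.ext fun i j => ?_
    rw [Matrix.mul_diagonal, Matrix.diagonal_mul]
    exact (Algebra.commutes _ _).symm
  refine ⟨n, ?_⟩
  have hzero : ((fun _ : Fin m => cB) ^ n) = fun _ : Fin m => (0 : Aq S t G n) := by
    funext x
    rw [Pi.pow_apply, hcB, cB_pow_eq_zero S t G n hn]
  rw [hMeq, hcomm.mul_pow, Matrix.diagonal_pow, hzero, Matrix.diagonal_zero, mul_zero]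

end StatementNineAux

/-- Let `X` be a finitely generated `A_n`-module whose underlying
`R_n`-module is isomorphic to `R_n^{⊕r} ⊕ R_{n-1}^{⊕s}`, and suppose that `X/t^{n-1}X` is
projective as a module over `A_{n-1}`.  Then there is a finitely generated projective
`A_n`-module `Y` and a surjective `A_n`-linear map `ψ : Y → X` whose kernel is annihilated
by `t`. -/
theorem statement9 (ht : Irreducible t) (n : ℕ) (hn : 1 ≤ n)
    (X : Type) [AddCommGroup X] [Module (Aq S t G n) X] [Module.Finite (Aq S t G n) X]
    (r s : ℕ)
    (hX :
      letI : Module (Rq S t n) X :=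
        Module.compHom X (algebraMap (Rq S t n) (Aq S t G n))
      letI : Module (Rq S t n) (Rq S t (n - 1)) :=
        Module.compHom _ (Rmap S t (n - 1) n (Nat.sub_le n 1))
      Nonempty (X ≃ₗ[Rq S t n] ((Fin r → Rq S t n) × (Fin s → Rq S t (n - 1)))))
    (hproj :
      ∃ inst : Module (Aq S t G (n - 1)) (X ⧸ tSub S t G n (n - 1) X),
        (∀ (a : Aq S t G n) (q : X ⧸ tSub S t G n (n - 1) X),
          letI := inst
          Amap S t G (n - 1) n (Nat.sub_le n 1) a • q = a • q) ∧
        letI := inst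
        Module.Projective (Aq S t G (n - 1)) (X ⧸ tSub S t G n (n - 1) X)) :
    Nonempty (ProjCover S t G n X) := by
  classical
  rcases lt_or_ge n 2 with h2 | h2
  · -- the case `n = 1`: here `tbar` is zero, so a free cover works.
    have hn1 : n = 1 := by omega
    subst hn1
    obtain ⟨m, p, hp⟩ := Module.Finite.exists_fin' (Aq S t G 1) X
    have htb : tbar S t 1 = 0 := by
      rw [tbar, Ideal.Quotient.eq_zero_iff_mem]
      rw [Ideal.mem_span_singleton, pow_one]
    exact ⟨{ Y := Fin m → Aq S t G 1
             finY := inferInstance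
             projY := inferInstance
             ψ := p
             surj := hp
             ker_ann := fun y _ => by rw [htb, map_zero, zero_smul] }⟩
  · -- the main case `n ≥ 2`.
    obtain ⟨instC, hcompat, hprojC⟩ := hproj
    letI := instC
    haveI := hprojC
    set cB : Aq S t G n := algebraMap (Rq S t n) (Aq S t G n) (tbar S t n ^ (n - 1)) with hcB
    -- `X/t^{n-1}X` is finitely generated over `A_{n-1}`
    haveI hfinB : Module.Finite (Aq S t G n) (X ⧸ tSub S t G n (n - 1) X) :=
      Module.Finite.of_surjective ((tSub S t G n (n - 1) X).mkQ) (Submodule.mkQ_surjective _)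
    haveI hfinC : Module.Finite (Aq S t G (n - 1)) (X ⧸ tSub S t G n (n - 1) X) := by
      obtain ⟨sset, hs⟩ := hfinB.fg_top
      refine ⟨⟨sset, ?_⟩⟩
      rw [eq_top_iff]
      intro x _
      have hx : x ∈ Submodule.span (Aq S t G n) (sset : Set _) := by rw [hs]; trivial
      refine Submodule.span_induction ?_ ?_ ?_ ?_ hx
      · exact fun z hz => Submodule.subset_span hz
      · exact Submodule.zero_mem _
      · exact fun a b _ _ ha hb => Submodule.add_mem _ ha hb
      · intro b z _ hz
        rw [← hcompat b z]
        exact Submodule.smul_mem _ _ hz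
    -- a finite free `A_{n-1}`-cover of `X/t^{n-1}X`, split by projectivity
    obtain ⟨m, p, hpsurj⟩ :=
      Module.Finite.exists_fin' (Aq S t G (n - 1)) (X ⧸ tSub S t G n (n - 1) X)
    obtain ⟨i, hi⟩ := Module.projective_lifting_property p LinearMap.id hpsurj
    have hpi : ∀ u, p (i u) = u := fun u => by
      have h := LinearMap.congr_fun hi u
      simpa using h
    set e := i.comp p with he_def
    have hee : ∀ w, e (e w) = e w := fun w => by
      show i (p (i (p w))) = i (p w)
      rw [hpi]
    -- the idempotent matrix associated to `e`
    set E : Matrix (Fin m) (Fin m) (Aq S t G (n - 1)) :=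
      Matrix.of (fun a b => e (Pi.single a 1) b) with hE_def
    have hsingle_smul : ∀ (w : Fin m → Aq S t G (n - 1)) (a : Fin m),
        (Pi.single a (w a) : Fin m → Aq S t G (n - 1)) =
          w a • (Pi.single a 1 : Fin m → Aq S t G (n - 1)) := by
      intro w a; funext b
      simp [Pi.single_apply, mul_ite]
    have hvecE : ∀ w : Fin m → Aq S t G (n - 1), Matrix.vecMul w E = e w := by
      intro w
      have hw : e w = ∑ a, w a • e (Pi.single a 1) := by
        conv_lhs => rw [← Finset.univ_sum_single w]
        rw [map_sum]
        exact Finset.sum_congr rfl fun a _ => by rw [hsingle_smul w a, map_smul]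
      funext b
      rw [hw]
      simp only [Matrix.vecMul, dotProduct, Finset.sum_apply, Pi.smul_apply,
        smul_eq_mul]
      rfl
    have hEE : IsIdempotentElem E := by
      show E * E = E
      refine Matrix.ext fun a b => ?_
      have h1 : (E * E) a b = Matrix.vecMul (E a) E b := by
        simp [Matrix.mul_apply, Matrix.vecMul, dotProduct]
      have h2 : E a = e (Pi.single a 1) := rfl
      rw [h1, hvecE (E a), h2, hee]
    -- lift the idempotent matrix to `A_n`
    have hrange : E ∈ RingHom.range
        ((Amap S t G (n - 1) n (Nat.sub_le n 1)).mapMatrix (m := Fin m)) := by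
      refine ⟨Matrix.of fun a b =>
        Function.surjInv (Amap_surjective S t G (n - 1) n (Nat.sub_le n 1)) (E a b), ?_⟩
      refine Matrix.ext fun a b => ?_
      simp only [RingHom.mapMatrix_apply, Matrix.map_apply, Matrix.of_apply]
      exact Function.surjInv_eq _ _
    obtain ⟨Eb, hEb_idem, hEb_map⟩ :=
      exists_isIdempotentElem_eq_of_ker_isNilpotent _
        (mapMatrix_ker_isNilpotent S t G n h2 m) E hrange hEE
    have hfE : ∀ a b, Amap S t G (n - 1) n (Nat.sub_le n 1) (Eb a b) = E a b := fun a b => by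
      rw [← hEb_map]; rfl
    -- the idempotent endomorphism of the free `A_n`-module
    let ε : (Fin m → Aq S t G n) →ₗ[Aq S t G n] (Fin m → Aq S t G n) :=
      { toFun := fun v => Matrix.vecMul v Eb
        map_add' := fun v w => by
          funext b
          simp [Matrix.vecMul, dotProduct, add_mul, Finset.sum_add_distrib]
        map_smul' := fun c v => by
          funext b
          simp [Matrix.vecMul, dotProduct, Finset.mul_sum, mul_assoc] }
    have hεapp : ∀ v, ε v = Matrix.vecMul v Eb := fun v => rfl
    have hε : ∀ v, ε (ε v) = ε v := fun v => by
      rw [hεapp, hεapp, Matrix.vecMul_vecMul, hEb_idem]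
    -- reduction mod `t^{n-1}` on the free module
    set red : (Fin m → Aq S t G n) → (Fin m → Aq S t G (n - 1)) :=
      fun v b => Amap S t G (n - 1) n (Nat.sub_le n 1) (v b) with hred_def
    have hredb : ∀ (v : Fin m → Aq S t G n) (b : Fin m),
        red v b = Amap S t G (n - 1) n (Nat.sub_le n 1) (v b) := fun v b => by
      rw [hred_def]
    have hred : ∀ v, red (Matrix.vecMul v Eb) = Matrix.vecMul (red v) E := by
      intro v; funext b
      simp only [hred_def, Matrix.vecMul, dotProduct, map_sum, map_mul]
      exact Finset.sum_congr rfl fun a _ => by rw [hfE]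
    set q := (tSub S t G n (n - 1) X).mkQ with hq_def
    let pB : (Fin m → Aq S t G n) →ₗ[Aq S t G n] (X ⧸ tSub S t G n (n - 1) X) :=
      { toFun := fun v => p (red v)
        map_add' := fun v w => by
          have h1 : red (v + w) = red v + red w := funext fun b => by
            simp [hredb]
          show p (red (v + w)) = p (red v) + p (red w)
          rw [h1, map_add]
        map_smul' := fun c v => by
          have h1 : red (c • v) = Amap S t G (n - 1) n (Nat.sub_le n 1) c • red v :=
            funext fun b => by
              simp [hredb, smul_eq_mul, map_mul]
          show p (red (c • v)) = c • p (red v)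
          rw [h1, map_smul]
          exact hcompat c (p (red v)) }
    set Ysub := LinearMap.range ε with hY_def
    have hYfix : ∀ y : Ysub, ε (y : Fin m → Aq S t G n) = (y : Fin m → Aq S t G n) := by
      rintro ⟨y, v, rfl⟩
      exact hε v
    haveI hYproj : Module.Projective (Aq S t G n) Ysub := by
      refine Module.Projective.of_split Ysub.subtype ε.rangeRestrict ?_
      refine LinearMap.ext fun y => Subtype.ext ?_
      simpa using hYfix y
    obtain ⟨ψ, hψ⟩ := Module.projective_lifting_property q (pB.comp Ysub.subtype)
      (Submodule.mkQ_surjective _)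
    have hψq : ∀ y : Ysub, q (ψ y) = pB (y : Fin m → Aq S t G n) := fun y =>
      LinearMap.congr_fun hψ y
    -- surjectivity, step 1: surjective modulo `t^{n-1}X`
    have hstep1 : ∀ x : X, ∃ (y : Ysub) (d : X), x = ψ y + cB • d := by
      intro x
      set w := i (q x) with hw_def
      obtain ⟨v, hv⟩ : ∃ v : Fin m → Aq S t G n, red v = w := by
        refine ⟨fun b =>
          Function.surjInv (Amap_surjective S t G (n - 1) n (Nat.sub_le n 1)) (w b), ?_⟩
        funext b
        exact Function.surjInv_eq (Amap_surjective S t G (n - 1) n (Nat.sub_le n 1)) (w b)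
      set y : Ysub := ⟨ε v, LinearMap.mem_range_self ε v⟩ with hy
      have h1 : q (ψ y) = q x := by
        rw [hψq y]
        show p (red (ε v)) = q x
        rw [hεapp, hred, hv, hvecE w]
        show p (i (p (i (q x)))) = q x
        rw [hpi, hpi]
      have h2 : x - ψ y ∈ tSub S t G n (n - 1) X := by
        rw [← Submodule.Quotient.eq]
        exact h1.symm
      obtain ⟨d, hd⟩ : ∃ d, cB • d = x - ψ y := by
        refine Submodule.span_induction ?_ ?_ ?_ ?_ h2
        · rintro z ⟨d, rfl⟩
          exact ⟨d, rfl⟩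
        · exact ⟨0, smul_zero _⟩
        · rintro z₁ z₂ - - ⟨d₁, hd₁⟩ ⟨d₂, hd₂⟩
          exact ⟨d₁ + d₂, by rw [smul_add, hd₁, hd₂]⟩
        · rintro c z - ⟨d, hd⟩
          refine ⟨c • d, ?_⟩
          rw [← hd, smul_smul, smul_smul, hcB, Algebra.commutes]
      exact ⟨y, d, by rw [hd]; abel⟩
    -- surjectivity, step 2: kill the error term by nilpotency
    have hkey : ∀ k : ℕ, ∀ x : X, ∃ (y : Ysub) (d : X), x = ψ y + (cB ^ k) • d := by
      intro k
      induction k with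
      | zero =>
        intro x
        exact ⟨0, x, by rw [map_zero, pow_zero, one_smul, zero_add]⟩
      | succ k ih =>
        intro x
        obtain ⟨y, d, rfl⟩ := ih x
        obtain ⟨y', d', rfl⟩ := hstep1 d
        refine ⟨y + (cB ^ k) • y', d', ?_⟩
        rw [map_add, map_smul, smul_add, smul_smul, ← pow_succ, add_assoc]
    have hsurj : Function.Surjective ψ := by
      intro x
      obtain ⟨y, d, rfl⟩ := hkey n x
      exact ⟨y, by rw [show cB ^ n = 0 from cB_pow_eq_zero S t G n h2, zero_smul, add_zero]⟩
    -- kernel killed by `t`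
    refine ⟨{ Y := Ysub
              finY := inferInstance
              projY := hYproj
              ψ := ψ
              surj := hsurj
              ker_ann := ?_ }⟩
    intro y hy
    have h0 : ψ y = 0 := hy
    have h1 : p (red (y : Fin m → Aq S t G n)) = 0 := by
      have h := hψq y
      rw [h0, map_zero] at h
      exact h.symm
    have h2 : red (y : Fin m → Aq S t G n) = 0 := by
      have h3 : red (y : Fin m → Aq S t G n) = e (red (y : Fin m → Aq S t G n)) := by
        conv_lhs => rw [← hYfix y]
        rw [hεapp, hred, hvecE]
      rw [h3]
      show i (p (red (y : Fin m → Aq S t G n))) = 0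
      rw [h1, map_zero]
    have h5 : algebraMap (Rq S t n) (Aq S t G n) (tbar S t n) •
        (y : Fin m → Aq S t G n) = 0 := by
      funext b
      obtain ⟨c, hc⟩ := Amap_ker S t G n ((y : Fin m → Aq S t G n) b) (congrFun h2 b)
      show algebraMap (Rq S t n) (Aq S t G n) (tbar S t n) * (y : Fin m → Aq S t G n) b = 0
      have hcen : algebraMap (Rq S t n) (Aq S t G n) (tbar S t n) * c =
          c * algebraMap (Rq S t n) (Aq S t G n) (tbar S t n) := Algebra.commutes _ _
      have hpow : tbar S t n * tbar S t n ^ (n - 1) = tbar S t n ^ n := by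
        rw [← pow_succ']
        congr 1
        omega
      rw [hc, ← mul_assoc, hcen, mul_assoc, ← map_mul, hpow, tbar_pow_eq_zero,
        map_zero, mul_zero]
    apply Subtype.ext
    rw [SetLike.val_smul]
    exact h5

end
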